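/- Let G be a group, H a subgroup of G of index 2, A a commutative group, ψ : H →* A a group homomorphism, and g ∈ G with g ∉ H. Then for every x ∈ H, the transfer homomorphism Ver : G →* A associated to ψ satisfies Ver(x) = ψ(x) · ψ(g⁻¹ x g) (note g⁻¹ x g ∈ H since a subgroup of index 2 is normal). -/

import Mathlib

open Subgroup Subgroup.leftTransversals
open scoped Pointwise

/-- Index-2 transfer formula on `H`: for `H ≤ G` of index 2, `g ∉ H`, `ψ : H →* A` with `A`
commutative, and `x ∈ H`, the transfer satisfies `Ver(x) = ψ(x) * ψ(g⁻¹ x g)`. -/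
theorem transfer_eq_of_index_two_mem
    {G : Type*} [Group G] {A : Type*} [CommGroup A]
    (H : Subgroup G) [H.FiniteIndex] (hidx : H.index = 2)
    (g : G) (hg : g ∉ H) (ψ : H →* A) :
    ∀ (x : H) (hmem : g⁻¹ * (x : G) * g ∈ H),
      ψ.transfer (x : G) = ψ x * ψ ⟨g⁻¹ * (x : G) * g, hmem⟩ := by
  intro x hmem
  classical
  set e : G ⧸ H := ((1 : G) : G ⧸ H) with he
  have hmk : ∀ a b : G, (a : G ⧸ H) = (b : G ⧸ H) ↔ a⁻¹ * b ∈ H := fun a b =>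
    QuotientGroup.eq
  have hcard : Nat.card (G ⧸ H) = 2 := hidx
  have hg1 : (g : G ⧸ H) ≠ e := by
    intro h
    exact hg (by simpa using H.inv_mem ((hmk g 1).mp h))
  have key : ∀ q : G ⧸ H, q ≠ e → q = (g : G ⧸ H) := by
    intro q hq
    obtain ⟨y, -, hy'⟩ := (Nat.card_eq_two_iff' e).mp hcard
    rw [hy' q hq, hy' _ hg1]
  set f : G ⧸ H → G := fun q => if q = e then 1 else g with hfdef
  have hf : ∀ q : G ⧸ H, ((f q : G) : G ⧸ H) = q := by
    intro q
    by_cases h : q = e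
    · simp [hfdef, h, he]
    · simp only [hfdef, if_neg h]
      exact (key q h).symm
  set f' : G ⧸ H → G := fun q => if q = e then (x : G) else (x : G) * g with hf'def
  have hf' : ∀ q : G ⧸ H, ((f' q : G) : G ⧸ H) = q := by
    intro q
    by_cases h : q = e
    · simp only [hf'def, if_pos h, h, he]
      exact (hmk (x : G) 1).mpr (by simpa using H.inv_mem x.2)
    · simp only [hf'def, if_neg h]
      rw [key q h]
      refine (hmk _ _).mpr ?_
      have : (g⁻¹ * (x : G) * g)⁻¹ ∈ H := H.inv_mem hmem
      simpa [mul_assoc, mul_inv_rev] using this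
  set T : H.LeftTransversal := ⟨Set.range f, isComplement_range_left hf⟩ with hT
  set S : H.LeftTransversal := ⟨Set.range f', isComplement_range_left hf'⟩ with hS
  have hff' : f' = fun q => (x : G) * f q := by
    funext q
    by_cases h : q = e <;> simp [hfdef, hf'def, h]
  have hsmul : (x : G) • T = S := by
    refine Subtype.ext ?_
    show (x : G) • Set.range f = Set.range f'
    rw [hff', Set.smul_set_range]
    rfl
  rw [MonoidHom.transfer_def ψ T, hsmul]
  have huniv : (@Finset.univ (G ⧸ H) H.fintypeQuotientOfFiniteIndex) = {e, (g : G ⧸ H)} := by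
    ext q
    simp only [Finset.mem_univ, true_iff, Finset.mem_insert, Finset.mem_singleton]
    by_cases h : q = e
    · exact Or.inl h
    · exact Or.inr (key q h)
  rw [show diff ψ T S =
      (@Finset.univ (G ⧸ H) H.fintypeQuotientOfFiniteIndex).prod fun q =>
        ψ ⟨(T.2.leftQuotientEquiv q : G)⁻¹ * S.2.leftQuotientEquiv q,
          QuotientGroup.leftRel_apply.mp <| Quotient.exact'
            (((T.2.leftQuotientEquiv).symm_apply_apply q).trans
              ((S.2.leftQuotientEquiv).symm_apply_apply q).symm)⟩ from rfl]
  rw [huniv, Finset.prod_pair (Ne.symm hg1)]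
  congr 1 <;> refine congrArg ψ (Subtype.ext ?_)
  · show (T.2.leftQuotientEquiv e : G)⁻¹ * S.2.leftQuotientEquiv e = (x : G)
    rw [IsComplement.leftQuotientEquiv_apply hf, IsComplement.leftQuotientEquiv_apply hf']
    simp [hfdef, hf'def]
  · show (T.2.leftQuotientEquiv (g : G⧸H) : G)⁻¹ *
        S.2.leftQuotientEquiv (g : G⧸H) = g⁻¹ * (x : G) * g
    rw [IsComplement.leftQuotientEquiv_apply hf, IsComplement.leftQuotientEquiv_apply hf']
    simp [hfdef, hf'def, hg1, mul_assoc]
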